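/- Let X : Fin N → Fin 2 → ℝ represent N processes with two increments each, where X i 0 is the value at time t₁ and X i 0 + X i 1 is the final value. Suppose the increments X i 1 are i.i.d. and independent of the first-stage values (X i 0). For any selection function f that picks a subset S of size n based on the first-stage values, the expected maximum of the final values over S is at most the expected maximum of final values over the greedy set S* (the n indices with the largest first-stage values). (Two-stage, one-elimination case of greedy optimality.) -/

import Mathlib

open MeasureTheory ProbabilityTheory

section Helpers

variable {N : ℕ}

/-- A permutation swapping two disjoint finsets via a given equiv, fixing everything else. -/
noncomputable def finsetSwapPerm {α : Type*} [DecidableEq α] (A B : Finset α)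
    (hd : Disjoint A B) (φ : {x // x ∈ A} ≃ {x // x ∈ B}) : Equiv.Perm α where
  toFun i := if h : i ∈ A then (φ ⟨i, h⟩ : α) else if h : i ∈ B then (φ.symm ⟨i, h⟩ : α) else i
  invFun i := if h : i ∈ B then (φ.symm ⟨i, h⟩ : α) else if h : i ∈ A then (φ ⟨i, h⟩ : α) else i
  left_inv := by
    intro i
    by_cases hA : i ∈ A
    · simp only [dif_pos hA]
      have hB : ((φ ⟨i, hA⟩ : {x // x ∈ B}) : α) ∈ B := (φ ⟨i, hA⟩).2
      simp only [dif_pos hB, Subtype.coe_eta, Equiv.symm_apply_apply]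
    · by_cases hB : i ∈ B
      · simp only [dif_neg hA, dif_pos hB]
        have hA' : ((φ.symm ⟨i, hB⟩ : {x // x ∈ A}) : α) ∈ A := (φ.symm ⟨i, hB⟩).2
        have hB' : ((φ.symm ⟨i, hB⟩ : {x // x ∈ A}) : α) ∉ B :=
          fun h => (Finset.disjoint_left.mp hd hA') h
        simp only [dif_neg hB', dif_pos hA', Subtype.coe_eta, Equiv.apply_symm_apply]
      · simp only [dif_neg hA, dif_neg hB]
  right_inv := by
    intro i
    by_cases hB : i ∈ B
    · simp only [dif_pos hB]
      have hA : ((φ.symm ⟨i, hB⟩ : {x // x ∈ A}) : α) ∈ A := (φ.symm ⟨i, hB⟩).2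
      simp only [dif_pos hA, Subtype.coe_eta, Equiv.apply_symm_apply]
    · by_cases hA : i ∈ A
      · simp only [dif_neg hB, dif_pos hA]
        have hB' : ((φ ⟨i, hA⟩ : {x // x ∈ B}) : α) ∈ B := (φ ⟨i, hA⟩).2
        have hA' : ((φ ⟨i, hA⟩ : {x // x ∈ B}) : α) ∉ A :=
          fun h => (Finset.disjoint_left.mp hd h) hB'
        simp only [dif_neg hA', dif_pos hB', Subtype.coe_eta, Equiv.symm_apply_apply]
      · simp only [dif_neg hA, dif_neg hB]

lemma exists_good_perm (v : Fin N → ℝ) (S T : Finset (Fin N)) (hcard : S.card = T.card)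
    (hgr : ∀ i ∈ T, ∀ j ∉ T, v j ≤ v i) :
    ∃ e : Equiv.Perm (Fin N), S.image e = T ∧ ∀ i ∈ S, v i ≤ v (e i) := by
  classical
  set A := S \ T with hA
  set B := T \ S with hB
  have hd : Disjoint A B := by
    rw [hA, hB, Finset.disjoint_left]
    intro a ha hb
    exact (Finset.mem_sdiff.mp hb).2 (Finset.mem_sdiff.mp ha).1
  have hcAB : A.card = B.card := Finset.card_sdiff_comm hcard
  set φ := Finset.equivOfCardEq hcAB with hφ
  refine ⟨finsetSwapPerm A B hd φ, ?_, ?_⟩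
  · -- image
    have hsub : ∀ i ∈ S, finsetSwapPerm A B hd φ i ∈ T := by
      intro i hi
      by_cases hiA : i ∈ A
      · have : (finsetSwapPerm A B hd φ) i = (φ ⟨i, hiA⟩ : Fin N) := by
          simp only [finsetSwapPerm, Equiv.coe_fn_mk, dif_pos hiA]
        rw [this]
        exact (Finset.mem_sdiff.mp (φ ⟨i, hiA⟩).2).1
      · have hiB : i ∉ B := fun h => (Finset.mem_sdiff.mp h).2 hi
        have : (finsetSwapPerm A B hd φ) i = i := by
          simp only [finsetSwapPerm, Equiv.coe_fn_mk, dif_neg hiA, dif_neg hiB]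
        rw [this]
        by_contra hiT
        exact hiA (Finset.mem_sdiff.mpr ⟨hi, hiT⟩)
    have h1 : S.image (finsetSwapPerm A B hd φ) ⊆ T := by
      intro j hj
      obtain ⟨i, hi, rfl⟩ := Finset.mem_image.mp hj
      exact hsub i hi
    refine Finset.eq_of_subset_of_card_le h1 ?_
    rw [Finset.card_image_of_injective _ (finsetSwapPerm A B hd φ).injective, ← hcard]
  · intro i hi
    by_cases hiA : i ∈ A
    · have heq : (finsetSwapPerm A B hd φ) i = (φ ⟨i, hiA⟩ : Fin N) := by
        simp only [finsetSwapPerm, Equiv.coe_fn_mk, dif_pos hiA]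
      rw [heq]
      exact hgr _ (Finset.mem_sdiff.mp (φ ⟨i, hiA⟩).2).1 i (Finset.mem_sdiff.mp hiA).2
    · have hiB : i ∉ B := fun h => (Finset.mem_sdiff.mp h).2 hi
      have : (finsetSwapPerm A B hd φ) i = i := by
        simp only [finsetSwapPerm, Equiv.coe_fn_mk, dif_neg hiA, dif_neg hiB]
      rw [this]

lemma integrable_finset_sup' {α : Type*} [MeasurableSpace α] {Q : Measure α} {ι : Type*}
    {S : Finset ι} (hS : S.Nonempty) {F : ι → α → ℝ}
    (hF : ∀ i ∈ S, Integrable (F i) Q) :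
    Integrable (fun a => S.sup' hS fun i => F i a) Q := by
  refine Finset.Nonempty.cons_induction
    (motive := fun s hs => (∀ i ∈ s, Integrable (F i) Q) →
      Integrable (fun a => s.sup' hs fun i => F i a) Q) ?_ ?_ hS hF
  · intro a h
    simpa using h a (Finset.mem_singleton_self a)
  · intro a s ha hs ih h
    have heq : (fun x => (Finset.cons a s ha).sup' (Finset.cons_nonempty ha) fun i => F i x)
        = fun x => F a x ⊔ s.sup' hs fun i => F i x := by
      funext x; rw [Finset.sup'_cons hs]
    rw [heq]
    have h1 : Integrable (F a) Q := h a (Finset.mem_cons_self a s)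
    have h2 : Integrable (fun x => s.sup' hs fun i => F i x) Q :=
      ih fun i hi => h i (Finset.mem_cons_of_mem hi)
    exact h1.sup h2

lemma measurable_select {α ι : Type*} [MeasurableSpace α] [Fintype ι] [DecidableEq ι]
    (c : α → ι) (G : ι → α → ℝ) (hc : ∀ s, MeasurableSet {a | c a = s})
    (hG : ∀ s, Measurable (G s)) : Measurable fun a => G (c a) a := by
  have heq : (fun a => G (c a) a)
      = fun a => ∑ s : ι, Set.indicator {a | c a = s} (G s) a := by
    funext a
    rw [Finset.sum_eq_single (c a)]
    · rw [Set.indicator_of_mem (by simp : a ∈ {a' | c a' = c a})]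
    · intro b _ hb
      refine Set.indicator_of_notMem ?_ _
      simp only [Set.mem_setOf_eq]
      exact fun h => hb (Eq.symm h)
    · simp
  rw [heq]
  exact Finset.measurable_sum _ fun s _ => (hG s).indicator (hc s)

lemma map_fun_eq_pi {Ω : Type*} [MeasurableSpace Ω] (μ : Measure Ω) [IsProbabilityMeasure μ]
    (Δ : Fin N → Ω → ℝ) (hm : ∀ i, Measurable (Δ i))
    (h : iIndepFun Δ μ) :
    μ.map (fun ω i => Δ i ω) = Measure.pi (fun i => μ.map (Δ i)) := by
  haveI : ∀ i, IsProbabilityMeasure (μ.map (Δ i)) :=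
    fun i => Measure.isProbabilityMeasure_map (hm i).aemeasurable
  refine (Measure.pi_eq fun s hs => ?_).symm
  have hmeas : Measurable (fun ω i => Δ i ω) := measurable_pi_lambda _ hm
  rw [Measure.map_apply hmeas (MeasurableSet.univ_pi hs)]
  have hpre : (fun ω i => Δ i ω) ⁻¹' (Set.pi Set.univ s) = ⋂ i, Δ i ⁻¹' s i := by
    ext ω; simp [Set.mem_pi]
  rw [hpre, h.meas_iInter fun i => ⟨s i, hs i, rfl⟩]
  exact Finset.prod_congr rfl fun i _ => (Measure.map_apply (hm i) (hs i)).symm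

lemma pi_map_perm (m : Fin N → Measure ℝ) [∀ i, IsProbabilityMeasure (m i)]
    (hm : ∀ i j, m i = m j) (e : Equiv.Perm (Fin N)) :
    (Measure.pi m).map (fun δ j => δ (e.symm j)) = Measure.pi m := by
  have h1 : (fun i => m (e i)) = m := funext fun i => hm _ _
  have hcoe : (fun (δ : Fin N → ℝ) (j : Fin N) => δ (e.symm j))
      = ⇑(MeasurableEquiv.piCongrLeft (fun _ : Fin N => ℝ) e) := by
    funext δ j
    conv_rhs => rw [← e.apply_symm_apply j]
    exact (MeasurableEquiv.piCongrLeft_apply_apply (β := fun _ : Fin N => ℝ) e δ (e.symm j)).symm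
  rw [hcoe]
  have h2 := Measure.pi_map_piCongrLeft (μ := m) e
  rwa [h1] at h2

lemma key_compare (Q : Measure (Fin N → ℝ)) [IsProbabilityMeasure Q]
    (hQint : ∀ i, Integrable (fun δ => δ i) Q)
    (hQinv : ∀ e : Equiv.Perm (Fin N), Q.map (fun δ j => δ (e.symm j)) = Q)
    (v : Fin N → ℝ) (S T : Finset (Fin N)) (hS : S.Nonempty) (hT : T.Nonempty)
    (hcard : S.card = T.card) (hgr : ∀ i ∈ T, ∀ j ∉ T, v j ≤ v i) :
    ∫ δ, S.sup' hS (fun i => v i + δ i) ∂Q ≤ ∫ δ, T.sup' hT (fun i => v i + δ i) ∂Q := by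
  obtain ⟨e, himg, hle⟩ := exists_good_perm v S T hcard hgr
  have int1 : Integrable (fun δ : Fin N → ℝ => S.sup' hS fun i => v i + δ i) Q :=
    integrable_finset_sup' hS fun i _ => (integrable_const _).add (hQint i)
  have int2 : Integrable (fun δ : Fin N → ℝ => T.sup' hT fun j => v j + δ (e.symm j)) Q :=
    integrable_finset_sup' hT fun j _ => (integrable_const _).add (hQint (e.symm j))
  have step1 : ∀ δ : Fin N → ℝ,
      S.sup' hS (fun i => v i + δ i) ≤ T.sup' hT (fun j => v j + δ (e.symm j)) := by
    intro δ
    have h1 : S.sup' hS (fun i => v i + δ i) ≤ S.sup' hS (fun i => v (e i) + δ i) :=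
      Finset.sup'_mono_fun fun i hi => add_le_add_left (hle i hi) _
    refine h1.trans_eq ?_
    have h2 : T.sup' hT (fun j => v j + δ (e.symm j))
        = (S.image e).sup' (himg ▸ hT) (fun j => v j + δ (e.symm j)) := by
      congr 1
      exact himg.symm
    rw [h2, Finset.sup'_image]
    refine Finset.sup'_congr _ rfl fun i _ => ?_
    simp [Function.comp, Equiv.symm_apply_apply]
  have hmono : ∫ δ, S.sup' hS (fun i => v i + δ i) ∂Q
      ≤ ∫ δ, T.sup' hT (fun j => v j + δ (e.symm j)) ∂Q :=
    integral_mono int1 int2 step1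
  refine hmono.trans_eq ?_
  have hmapmeas : Measurable (fun δ : Fin N → ℝ => fun j => δ (e.symm j)) :=
    measurable_pi_lambda _ fun j => measurable_pi_apply _
  have hGmeas : Measurable (fun δ' : Fin N → ℝ => T.sup' hT fun j => v j + δ' j) := by
    have := Finset.measurable_sup' (α := ℝ) hT
      (f := fun j (δ' : Fin N → ℝ) => v j + δ' j)
      (fun j _ => measurable_const.add (measurable_pi_apply j))
    have heq : (T.sup' hT fun j (δ' : Fin N → ℝ) => v j + δ' j)
        = fun δ' => T.sup' hT fun j => v j + δ' j := by
      funext δ'; exact Finset.sup'_apply hT _ δ'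
    exact heq ▸ this
  calc ∫ δ, T.sup' hT (fun j => v j + δ (e.symm j)) ∂Q
      = ∫ δ', T.sup' hT (fun j => v j + δ' j) ∂(Q.map (fun δ j => δ (e.symm j))) := by
        rw [integral_map hmapmeas.aemeasurable hGmeas.aestronglyMeasurable]
    _ = ∫ δ', T.sup' hT (fun j => v j + δ' j) ∂Q := by rw [hQinv e]

end Helpers

section Main

variable {N : ℕ}

/-- The payoff function: sup of `p.1 i + p.2 i` over a finset (0 if empty). -/
noncomputable def FF (S : Finset (Fin N)) (p : (Fin N → ℝ) × (Fin N → ℝ)) : ℝ :=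
  if h : S.Nonempty then S.sup' h (fun i => p.1 i + p.2 i) else 0

lemma measurable_FF (S : Finset (Fin N)) : Measurable (FF S) := by
  unfold FF
  by_cases h : S.Nonempty
  · simp only [dif_pos h]
    have := Finset.measurable_sup' (α := ℝ) h
      (f := fun i (p : (Fin N → ℝ) × (Fin N → ℝ)) => p.1 i + p.2 i)
      (fun i _ => ((measurable_pi_apply i).comp measurable_fst).add
        ((measurable_pi_apply i).comp measurable_snd))
    have heq : (S.sup' h fun i (p : (Fin N → ℝ) × (Fin N → ℝ)) => p.1 i + p.2 i)
        = fun p => S.sup' h fun i => p.1 i + p.2 i := by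
      funext p; exact Finset.sup'_apply h _ p
    exact heq ▸ this
  · simp only [dif_neg h]
    exact measurable_const

lemma abs_FF_le (S : Finset (Fin N)) (p : (Fin N → ℝ) × (Fin N → ℝ)) :
    |FF S p| ≤ ∑ i, (|p.1 i| + |p.2 i|) := by
  unfold FF
  by_cases h : S.Nonempty
  · simp only [dif_pos h]
    obtain ⟨i₀, hi₀⟩ := h
    rw [abs_le]
    constructor
    · have h1 : |p.1 i₀ + p.2 i₀| ≤ ∑ i, (|p.1 i| + |p.2 i|) :=
        (abs_add_le _ _).trans (Finset.single_le_sum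
          (f := fun i => |p.1 i| + |p.2 i|) (fun i _ => by positivity) (Finset.mem_univ i₀))
      have h2 : -(∑ i, (|p.1 i| + |p.2 i|)) ≤ p.1 i₀ + p.2 i₀ := by
        have := neg_abs_le (p.1 i₀ + p.2 i₀)
        linarith
      exact h2.trans (Finset.le_sup' (fun i => p.1 i + p.2 i) hi₀)
    · refine Finset.sup'_le _ _ fun i hi => ?_
      have : |p.1 i + p.2 i| ≤ ∑ j, (|p.1 j| + |p.2 j|) :=
        (abs_add_le _ _).trans (Finset.single_le_sum
          (f := fun j => |p.1 j| + |p.2 j|) (fun j _ => by positivity) (Finset.mem_univ i))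
      exact (le_abs_self _).trans this
  · simp only [dif_neg h, abs_zero]
    positivity

theorem two_stage_greedy_optimal' {Ω : Type*} [MeasurableSpace Ω] (μ : Measure Ω)
    [IsProbabilityMeasure μ] {n : ℕ} (hn : 0 < n)
    (V Δ : Fin N → Ω → ℝ)
    (hVmeas : ∀ i, Measurable (V i)) (hΔmeas : ∀ i, Measurable (Δ i))
    (hVint : ∀ i, Integrable (V i) μ) (hΔint : ∀ i, Integrable (Δ i) μ)
    (hΔiid : iIndepFun Δ μ)
    (hΔident : ∀ i j, μ.map (Δ i) = μ.map (Δ j))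
    (hindep : IndepFun (fun ω i => V i ω) (fun ω i => Δ i ω) μ)
    (f g : (Fin N → ℝ) → Finset (Fin N))
    (hfcard : ∀ v, (f v).card = n) (hgcard : ∀ v, (g v).card = n)
    (hfmeas : ∀ S, MeasurableSet {v | f v = S}) (hgmeas : ∀ S, MeasurableSet {v | g v = S})
    (hgreedy : ∀ v, ∀ i ∈ g v, ∀ j ∉ g v, v j ≤ v i) :
    ∫ ω, FF (f (fun i => V i ω)) (fun i => V i ω, fun i => Δ i ω) ∂μ ≤
    ∫ ω, FF (g (fun i => V i ω)) (fun i => V i ω, fun i => Δ i ω) ∂μ := by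
  classical
  set Vv : Ω → (Fin N → ℝ) := fun ω i => V i ω with hVv_def
  set Dv : Ω → (Fin N → ℝ) := fun ω i => Δ i ω with hDv_def
  have hVv : Measurable Vv := measurable_pi_lambda _ hVmeas
  have hDv : Measurable Dv := measurable_pi_lambda _ hΔmeas
  set PV := μ.map Vv with hPV_def
  set PD := μ.map Dv with hPD_def
  haveI : IsProbabilityMeasure PV := Measure.isProbabilityMeasure_map hVv.aemeasurable
  haveI : IsProbabilityMeasure PD := Measure.isProbabilityMeasure_map hDv.aemeasurable
  set W : Ω → (Fin N → ℝ) × (Fin N → ℝ) := fun ω => (Vv ω, Dv ω) with hW_def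
  have hWmeas : Measurable W := hVv.prodMk hDv
  have hmapW : μ.map W = PV.prod PD :=
    (indepFun_iff_map_prod_eq_prod_map_map hVv.aemeasurable hDv.aemeasurable).mp hindep
  -- measurability of the two payoff maps
  have hΦf : Measurable (fun p : (Fin N → ℝ) × (Fin N → ℝ) => FF (f p.1) p) := by
    apply measurable_select (c := fun p : (Fin N → ℝ) × (Fin N → ℝ) => f p.1) (G := FF)
    · exact fun S => measurable_fst (hfmeas S)
    · exact measurable_FF
  have hΦg : Measurable (fun p : (Fin N → ℝ) × (Fin N → ℝ) => FF (g p.1) p) := by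
    apply measurable_select (c := fun p : (Fin N → ℝ) × (Fin N → ℝ) => g p.1) (G := FF)
    · exact fun S => measurable_fst (hgmeas S)
    · exact measurable_FF
  -- integrability on the product measure
  have hfst : MeasurePreserving (Prod.fst : (Fin N → ℝ) × (Fin N → ℝ) → (Fin N → ℝ))
      (PV.prod PD) PV := ⟨measurable_fst, by simp [Measure.map_fst_prod]⟩
  have hsnd : MeasurePreserving (Prod.snd : (Fin N → ℝ) × (Fin N → ℝ) → (Fin N → ℝ))
      (PV.prod PD) PD := ⟨measurable_snd, by simp [Measure.map_snd_prod]⟩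
  have hint1 : ∀ i, Integrable (fun w : Fin N → ℝ => |w i|) PV := by
    intro i
    rw [hPV_def, integrable_map_measure (measurable_pi_apply i).abs.aestronglyMeasurable
      hVv.aemeasurable]
    exact (hVint i).abs
  have hint2 : ∀ i, Integrable (fun w : Fin N → ℝ => |w i|) PD := by
    intro i
    rw [hPD_def, integrable_map_measure (measurable_pi_apply i).abs.aestronglyMeasurable
      hDv.aemeasurable]
    exact (hΔint i).abs
  have hB : Integrable (fun p : (Fin N → ℝ) × (Fin N → ℝ) => ∑ i, (|p.1 i| + |p.2 i|))
      (PV.prod PD) := by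
    apply integrable_finset_sum
    intro i _
    exact ((hfst.integrable_comp (hint1 i).aestronglyMeasurable).mpr (hint1 i)).add
      ((hsnd.integrable_comp (hint2 i).aestronglyMeasurable).mpr (hint2 i))
  have hΦf_int : Integrable (fun p : (Fin N → ℝ) × (Fin N → ℝ) => FF (f p.1) p)
      (PV.prod PD) :=
    hB.mono' hΦf.aestronglyMeasurable (Filter.Eventually.of_forall fun p => by
      rw [Real.norm_eq_abs]; exact abs_FF_le _ p)
  have hΦg_int : Integrable (fun p : (Fin N → ℝ) × (Fin N → ℝ) => FF (g p.1) p)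
      (PV.prod PD) :=
    hB.mono' hΦg.aestronglyMeasurable (Filter.Eventually.of_forall fun p => by
      rw [Real.norm_eq_abs]; exact abs_FF_le _ p)
  -- change of variables to the product measure
  have hL : ∫ ω, FF (f fun i => V i ω) (fun i => V i ω, fun i => Δ i ω) ∂μ
      = ∫ p, FF (f p.1) p ∂(PV.prod PD) := by
    rw [← hmapW, integral_map hWmeas.aemeasurable hΦf.aestronglyMeasurable]
  have hR : ∫ ω, FF (g fun i => V i ω) (fun i => V i ω, fun i => Δ i ω) ∂μ
      = ∫ p, FF (g p.1) p ∂(PV.prod PD) := by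
    rw [← hmapW, integral_map hWmeas.aemeasurable hΦg.aestronglyMeasurable]
  rw [hL, hR, integral_prod _ hΦf_int, integral_prod _ hΦg_int]
  -- pointwise comparison in the first coordinate
  have hPD_pi : PD = Measure.pi (fun i => μ.map (Δ i)) := map_fun_eq_pi μ Δ hΔmeas hΔiid
  haveI : ∀ i, IsProbabilityMeasure (μ.map (Δ i)) :=
    fun i => Measure.isProbabilityMeasure_map (hΔmeas i).aemeasurable
  have hQinv : ∀ e : Equiv.Perm (Fin N), PD.map (fun δ j => δ (e.symm j)) = PD := by
    intro e; rw [hPD_pi]; exact pi_map_perm _ hΔident e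
  have hQint : ∀ i, Integrable (fun δ : Fin N → ℝ => δ i) PD := by
    intro i
    rw [hPD_def, integrable_map_measure (measurable_pi_apply i).aestronglyMeasurable
      hDv.aemeasurable]
    exact hΔint i
  refine integral_mono hΦf_int.integral_prod_left hΦg_int.integral_prod_left fun v => ?_
  have hfv : (f v).Nonempty := Finset.card_pos.mp (by rw [hfcard]; exact hn)
  have hgv : (g v).Nonempty := Finset.card_pos.mp (by rw [hgcard]; exact hn)
  have hkey := key_compare PD hQint hQinv v (f v) (g v) hfv hgv
    ((hfcard v).trans (hgcard v).symm) (hgreedy v)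
  simpa [FF, dif_pos hfv, dif_pos hgv] using hkey

end Main

/-- Two-stage, one-elimination greedy optimality: `V i` are the first-stage values,
`Δ i` are i.i.d. second-stage increments independent of the first-stage values. For any
measurable selection rule `f` choosing an `n`-element subset from the first-stage values,
the expected maximum of final values over `f`'s choice is at most that over the greedy
choice `g` (the `n` indices with largest first-stage values). -/
theorem two_stage_greedy_optimal {Ω : Type*} [MeasurableSpace Ω] (μ : Measure Ω)
    [IsProbabilityMeasure μ] {N n : ℕ} (hn : 0 < n)
    (V Δ : Fin N → Ω → ℝ)
    (hVmeas : ∀ i, Measurable (V i)) (hΔmeas : ∀ i, Measurable (Δ i))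
    (hVint : ∀ i, Integrable (V i) μ) (hΔint : ∀ i, Integrable (Δ i) μ)
    (hΔiid : iIndepFun Δ μ)
    (hΔident : ∀ i j, μ.map (Δ i) = μ.map (Δ j))
    (hindep : IndepFun (fun ω i => V i ω) (fun ω i => Δ i ω) μ)
    (f g : (Fin N → ℝ) → Finset (Fin N))
    (hfcard : ∀ v, (f v).card = n) (hgcard : ∀ v, (g v).card = n)
    (hfmeas : ∀ S, MeasurableSet {v | f v = S}) (hgmeas : ∀ S, MeasurableSet {v | g v = S})
    (hgreedy : ∀ v, ∀ i ∈ g v, ∀ j ∉ g v, v j ≤ v i) :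
    ∫ ω, (f (fun i => V i ω)).sup'
        (Finset.card_pos.mp (by rw [hfcard]; exact hn)) (fun i => V i ω + Δ i ω) ∂μ ≤
    ∫ ω, (g (fun i => V i ω)).sup'
        (Finset.card_pos.mp (by rw [hgcard]; exact hn)) (fun i => V i ω + Δ i ω) ∂μ := by
  have key := two_stage_greedy_optimal' μ hn V Δ hVmeas hΔmeas hVint hΔint hΔiid hΔident
    hindep f g hfcard hgcard hfmeas hgmeas hgreedy
  have h1 : ∀ ω, FF (f fun i => V i ω) (fun i => V i ω, fun i => Δ i ω)
      = (f (fun i => V i ω)).sup'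
        (Finset.card_pos.mp (by rw [hfcard]; exact hn)) (fun i => V i ω + Δ i ω) :=
    fun ω => dif_pos _
  have h2 : ∀ ω, FF (g fun i => V i ω) (fun i => V i ω, fun i => Δ i ω)
      = (g (fun i => V i ω)).sup'
        (Finset.card_pos.mp (by rw [hgcard]; exact hn)) (fun i => V i ω + Δ i ω) :=
    fun ω => dif_pos _
  simpa only [h1, h2] using key
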